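/- Recursive bound propagation for adapted Wasserstein error: let $T \ge 1$, $\mathcal{T} > 1$, $\epsilon_{score} < 1$, and $\alpha(\mathcal{T}) := \mathcal{T}^2 e^{-\mathcal{T}} + e^{-c\mathcal{T}} < 1$. Suppose a nonnegative sequence $(a_t)_{t=1}^T$ satisfies $a_1 \le C(\mathcal{T}^{5/2}\epsilon_{score} + \alpha(\mathcal{T}))$ and $a_{t+1} \le C\left( a_t + \mathcal{T}^{5/2}\epsilon_{score} + \mathcal{T}^{5/2} a_t^{1/2} + \alpha(\mathcal{T}) \right)$ for $t = 1, \dots, T-1$. Then $a_T \le C'\left( \mathcal{T}^{5T/2}\, \epsilon_{score}^{1/2^{T-1}} + \mathcal{T}^{5(T-1)/2}\, \alpha(\mathcal{T})^{1/2^{T-1}} \right)$ for a constant $C'$ depending only on $C$ and $T$. -/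
import Mathlib

/-- Subadditivity of square root. -/
lemma aux_sqrt_add (x y : ℝ) (hx : 0 ≤ x) (hy : 0 ≤ y) :
    (x + y) ^ ((1 : ℝ) / 2) ≤ x ^ ((1 : ℝ) / 2) + y ^ ((1 : ℝ) / 2) := by
  rw [← Real.sqrt_eq_rpow, ← Real.sqrt_eq_rpow, ← Real.sqrt_eq_rpow]
  have h : x + y ≤ (Real.sqrt x + Real.sqrt y) ^ 2 := by
    nlinarith [Real.sq_sqrt hx, Real.sq_sqrt hy, Real.sqrt_nonneg x, Real.sqrt_nonneg y]
  calc Real.sqrt (x + y) ≤ Real.sqrt ((Real.sqrt x + Real.sqrt y) ^ 2) := Real.sqrt_le_sqrt h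
    _ = Real.sqrt x + Real.sqrt y := Real.sqrt_sq (by positivity)

set_option maxHeartbeats 1600000 in
/-- Recursive bound propagation for adapted Wasserstein error. -/
theorem stmt_19 (C : ℝ) (T : ℕ) (hC : 0 < C) (hT : 1 ≤ T) :
    ∃ C' : ℝ, 0 < C' ∧
      ∀ (c 𝒯 ε : ℝ), 0 < c → 1 < 𝒯 → 0 ≤ ε → ε < 1 →
        𝒯 ^ 2 * Real.exp (-𝒯) + Real.exp (-(c * 𝒯)) < 1 →
        ∀ a : ℕ → ℝ, (∀ t, 0 ≤ a t) →
          a 1 ≤ C * (𝒯 ^ ((5 : ℝ) / 2) * ε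
              + (𝒯 ^ 2 * Real.exp (-𝒯) + Real.exp (-(c * 𝒯)))) →
          (∀ t : ℕ, 1 ≤ t → t ≤ T - 1 →
            a (t + 1) ≤ C * (a t + 𝒯 ^ ((5 : ℝ) / 2) * ε
              + 𝒯 ^ ((5 : ℝ) / 2) * (a t) ^ ((1 : ℝ) / 2)
              + (𝒯 ^ 2 * Real.exp (-𝒯) + Real.exp (-(c * 𝒯))))) →
          a T ≤ C' * (𝒯 ^ ((5 : ℝ) * T / 2) * ε ^ ((1 : ℝ) / 2 ^ (T - 1))
            + 𝒯 ^ ((5 : ℝ) * ((T : ℝ) - 1) / 2)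
              * (𝒯 ^ 2 * Real.exp (-𝒯) + Real.exp (-(c * 𝒯)))
                  ^ ((1 : ℝ) / 2 ^ (T - 1))) := by
  refine ⟨(4 * C + 4) ^ T, by positivity, ?_⟩
  intro c 𝒯 ε hc h𝒯 hε0 hε1 hα1 a ha h1 hrec
  set α := 𝒯 ^ 2 * Real.exp (-𝒯) + Real.exp (-(c * 𝒯)) with hαdef
  have h𝒯0 : (0 : ℝ) < 𝒯 := by linarith
  have h𝒯1 : (1 : ℝ) ≤ 𝒯 := h𝒯.le
  have hαpos : 0 < α := by positivity
  set D := 4 * C + 4 with hDdef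
  have hD1 : (1 : ℝ) ≤ D := by linarith
  have hDpos : (0 : ℝ) < D := by linarith
  -- key induction
  have key : ∀ t : ℕ, 1 ≤ t → t ≤ T →
      a t ≤ D ^ t * (𝒯 ^ ((5 : ℝ) * t / 2) * ε ^ ((1 : ℝ) / 2 ^ (t - 1))
        + 𝒯 ^ ((5 : ℝ) * ((t : ℝ) - 1) / 2) * α ^ ((1 : ℝ) / 2 ^ (t - 1))) := by
    intro t
    induction t with
    | zero => omega
    | succ t ih =>
      intro _ hle
      rcases Nat.eq_zero_or_pos t with ht0 | ht1
      · -- base case: t = 0, so t+1 = 1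
        subst ht0
        norm_num
        have hnn : 0 ≤ 𝒯 ^ ((5 : ℝ) / 2) * ε + α := by positivity
        calc a 1 ≤ C * (𝒯 ^ ((5 : ℝ) / 2) * ε + α) := h1
          _ ≤ D * (𝒯 ^ ((5 : ℝ) / 2) * ε + α) :=
            mul_le_mul_of_nonneg_right (by linarith) hnn
      · -- inductive step: t ≥ 1
        have htT : t ≤ T := le_trans (Nat.le_succ t) hle
        have htR : (1 : ℝ) ≤ (t : ℝ) := by exact_mod_cast ht1
        have ihb := ih ht1 htT
        have hrect := hrec t ht1 (by omega)
        set e : ℝ := (1 : ℝ) / 2 ^ (t - 1) with hedef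
        have he_pos : 0 < e := by positivity
        have he_le1 : e ≤ 1 := by
          rw [hedef, div_le_one (by positivity)]
          exact one_le_pow₀ (by norm_num)
        have he_half : e / 2 = (1 : ℝ) / 2 ^ t := by
          rw [hedef, div_div]
          congr 1
          rw [← pow_succ]
          congr 1
          omega
        have hts : (t + 1 : ℕ) - 1 = t := by omega
        set X := 𝒯 ^ ((5 : ℝ) * t / 2) * ε ^ e with hXdef
        set Y := 𝒯 ^ ((5 : ℝ) * ((t : ℝ) - 1) / 2) * α ^ e with hYdef
        set X' := 𝒯 ^ ((5 : ℝ) * (t + 1 : ℕ) / 2) * ε ^ (e / 2) with hX'def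
        set Y' := 𝒯 ^ ((5 : ℝ) * (((t + 1 : ℕ) : ℝ) - 1) / 2) * α ^ (e / 2) with hY'def
        have hXnn : 0 ≤ X := by positivity
        have hYnn : 0 ≤ Y := by positivity
        have hX'nn : 0 ≤ X' := by positivity
        have hY'nn : 0 ≤ Y' := by positivity
        have hcast : ((t + 1 : ℕ) : ℝ) = (t : ℝ) + 1 := by push_cast; ring
        have hεmono : ∀ p q : ℝ, 0 < q → q ≤ p → ε ^ p ≤ ε ^ q := fun p q hq hpq =>
          Real.rpow_le_rpow_of_exponent_ge' hε0 hε1.le hq.le hpq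
        have hαmono : ∀ p q : ℝ, 0 < q → q ≤ p → α ^ p ≤ α ^ q :=
          fun p q hq hpq => Real.rpow_le_rpow_of_exponent_ge hαpos hα1.le hpq
        -- (i) X ≤ X', Y ≤ Y'
        have hXX' : X ≤ X' := by
          rw [hXdef, hX'def]
          apply mul_le_mul
          · exact Real.rpow_le_rpow_of_exponent_le h𝒯1 (by rw [hcast]; linarith)
          · exact hεmono e (e / 2) (by linarith) (by linarith)
          · positivity
          · positivity
        have hYY' : Y ≤ Y' := by
          rw [hYdef, hY'def]
          apply mul_le_mul
          · exact Real.rpow_le_rpow_of_exponent_le h𝒯1 (by rw [hcast]; linarith)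
          · exact hαmono e (e / 2) (by linarith) (by linarith)
          · positivity
          · positivity
        -- (ii) 𝒯^{5/2} ε ≤ X'
        have hεterm : 𝒯 ^ ((5 : ℝ) / 2) * ε ≤ X' := by
          rw [hX'def]
          apply mul_le_mul
          · exact Real.rpow_le_rpow_of_exponent_le h𝒯1 (by rw [hcast]; linarith)
          · calc ε = ε ^ (1 : ℝ) := (Real.rpow_one ε).symm
              _ ≤ ε ^ (e / 2) := hεmono 1 (e / 2) (by linarith) (by linarith)
          · exact hε0
          · positivity
        -- (iii) α ≤ Y'
        have hαterm : α ≤ Y' := by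
          rw [hY'def]
          have h1' : (1 : ℝ) ≤ 𝒯 ^ ((5 : ℝ) * (((t + 1 : ℕ) : ℝ) - 1) / 2) :=
            Real.one_le_rpow h𝒯1 (by rw [hcast]; linarith)
          have h2' : α ≤ α ^ (e / 2) := by
            calc α = α ^ (1 : ℝ) := (Real.rpow_one α).symm
              _ ≤ α ^ (e / 2) := hαmono 1 (e / 2) (by linarith) (by linarith)
          calc α ≤ α ^ (e / 2) := h2'
            _ = 1 * α ^ (e / 2) := (one_mul _).symm
            _ ≤ 𝒯 ^ ((5 : ℝ) * (((t + 1 : ℕ) : ℝ) - 1) / 2) * α ^ (e / 2) :=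
              mul_le_mul_of_nonneg_right h1' (by positivity)
        -- (iv) sqrt term
        have hsqrt : 𝒯 ^ ((5 : ℝ) / 2) * (a t) ^ ((1 : ℝ) / 2) ≤ D ^ t * (X' + Y') := by
          have hDt1 : (1 : ℝ) ≤ D ^ t := one_le_pow₀ hD1
          have step1 : (a t) ^ ((1 : ℝ) / 2) ≤ (D ^ t * (X + Y)) ^ ((1 : ℝ) / 2) :=
            Real.rpow_le_rpow (ha t) ihb (by norm_num)
          have step2 : (D ^ t * (X + Y)) ^ ((1 : ℝ) / 2)
              = (D ^ t : ℝ) ^ ((1 : ℝ) / 2) * (X + Y) ^ ((1 : ℝ) / 2) :=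
            Real.mul_rpow (by positivity) (by positivity)
          have step3 : (D ^ t : ℝ) ^ ((1 : ℝ) / 2) ≤ D ^ t := by
            calc (D ^ t : ℝ) ^ ((1 : ℝ) / 2) ≤ (D ^ t : ℝ) ^ (1 : ℝ) :=
                Real.rpow_le_rpow_of_exponent_le hDt1 (by norm_num)
              _ = D ^ t := Real.rpow_one _
          have step4 : (X + Y) ^ ((1 : ℝ) / 2) ≤ X ^ ((1 : ℝ) / 2) + Y ^ ((1 : ℝ) / 2) :=
            aux_sqrt_add X Y hXnn hYnn
          have hXs : 𝒯 ^ ((5 : ℝ) / 2) * X ^ ((1 : ℝ) / 2) ≤ X' := by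
            have hm : (𝒯 ^ ((5 : ℝ) * t / 2) * ε ^ e) ^ ((1 : ℝ) / 2)
                = (𝒯 ^ ((5 : ℝ) * t / 2)) ^ ((1 : ℝ) / 2) * (ε ^ e) ^ ((1 : ℝ) / 2) :=
              Real.mul_rpow (by positivity) (by positivity)
            rw [hXdef, hX'def, hm,
              ← Real.rpow_mul h𝒯0.le, ← Real.rpow_mul hε0,
              ← mul_assoc, ← Real.rpow_add h𝒯0]
            apply mul_le_mul
            · apply Real.rpow_le_rpow_of_exponent_le h𝒯1
              rw [hcast]; linarith
            · rw [show e * (1 / 2) = e / 2 by ring]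
            · positivity
            · positivity
          have hYs : 𝒯 ^ ((5 : ℝ) / 2) * Y ^ ((1 : ℝ) / 2) ≤ Y' := by
            have hm : (𝒯 ^ ((5 : ℝ) * ((t : ℝ) - 1) / 2) * α ^ e) ^ ((1 : ℝ) / 2)
                = (𝒯 ^ ((5 : ℝ) * ((t : ℝ) - 1) / 2)) ^ ((1 : ℝ) / 2) * (α ^ e) ^ ((1 : ℝ) / 2) :=
              Real.mul_rpow (by positivity) (by positivity)
            rw [hYdef, hY'def, hm,
              ← Real.rpow_mul h𝒯0.le, ← Real.rpow_mul hαpos.le,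
              ← mul_assoc, ← Real.rpow_add h𝒯0]
            apply mul_le_mul
            · apply Real.rpow_le_rpow_of_exponent_le h𝒯1
              rw [hcast]; linarith
            · rw [show e * (1 / 2) = e / 2 by ring]
            · positivity
            · positivity
          have h𝒯52 : (0 : ℝ) < 𝒯 ^ ((5 : ℝ) / 2) := by positivity
          calc 𝒯 ^ ((5 : ℝ) / 2) * (a t) ^ ((1 : ℝ) / 2)
              ≤ 𝒯 ^ ((5 : ℝ) / 2) * ((D ^ t : ℝ) ^ ((1 : ℝ) / 2) * (X + Y) ^ ((1 : ℝ) / 2)) := by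
                rw [← step2]; exact mul_le_mul_of_nonneg_left step1 h𝒯52.le
            _ ≤ 𝒯 ^ ((5 : ℝ) / 2) * (D ^ t * (X ^ ((1 : ℝ) / 2) + Y ^ ((1 : ℝ) / 2))) := by
                apply mul_le_mul_of_nonneg_left _ h𝒯52.le
                exact mul_le_mul step3 step4 (by positivity) (by positivity)
            _ = D ^ t * (𝒯 ^ ((5 : ℝ) / 2) * X ^ ((1 : ℝ) / 2)
                  + 𝒯 ^ ((5 : ℝ) / 2) * Y ^ ((1 : ℝ) / 2)) := by ring
            _ ≤ D ^ t * (X' + Y') := by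
                apply mul_le_mul_of_nonneg_left _ (by positivity)
                exact add_le_add hXs hYs
        -- combine
        have hDt1 : (1 : ℝ) ≤ D ^ t := one_le_pow₀ hD1
        have hXY'nn : (0 : ℝ) ≤ X' + Y' := by linarith
        have hDtnn : (0 : ℝ) ≤ (D : ℝ) ^ t := by positivity
        have hfinal : a (t + 1) ≤ D ^ (t + 1) * (X' + Y') := by
          have hat : a t ≤ D ^ t * (X' + Y') := by
            refine le_trans ihb ?_
            exact mul_le_mul_of_nonneg_left (add_le_add hXX' hYY') hDtnn
          have hX'le : X' ≤ D ^ t * (X' + Y') :=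
            le_trans (by linarith) (le_mul_of_one_le_left hXY'nn hDt1)
          have hY'le : Y' ≤ D ^ t * (X' + Y') :=
            le_trans (by linarith) (le_mul_of_one_le_left hXY'nn hDt1)
          have hεterm' : 𝒯 ^ ((5 : ℝ) / 2) * ε ≤ D ^ t * (X' + Y') :=
            le_trans hεterm hX'le
          have hαterm' : α ≤ D ^ t * (X' + Y') := le_trans hαterm hY'le
          calc a (t + 1)
              ≤ C * (a t + 𝒯 ^ ((5 : ℝ) / 2) * ε
                  + 𝒯 ^ ((5 : ℝ) / 2) * (a t) ^ ((1 : ℝ) / 2) + α) := hrect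
            _ ≤ C * (D ^ t * (X' + Y') + D ^ t * (X' + Y')
                  + D ^ t * (X' + Y') + D ^ t * (X' + Y')) := by
                apply mul_le_mul_of_nonneg_left _ hC.le
                have := hsqrt
                linarith
            _ = (4 * C) * (D ^ t * (X' + Y')) := by ring
            _ ≤ D * (D ^ t * (X' + Y')) :=
                mul_le_mul_of_nonneg_right (by rw [hDdef]; linarith)
                  (mul_nonneg hDtnn hXY'nn)
            _ = D ^ (t + 1) * (X' + Y') := by rw [pow_succ]; ring
        rw [hts]
        calc a (t + 1) ≤ D ^ (t + 1) * (X' + Y') := hfinal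
          _ = D ^ (t + 1) * (𝒯 ^ ((5 : ℝ) * (t + 1 : ℕ) / 2) * ε ^ ((1 : ℝ) / 2 ^ t)
              + 𝒯 ^ ((5 : ℝ) * (((t + 1 : ℕ) : ℝ) - 1) / 2) * α ^ ((1 : ℝ) / 2 ^ t)) := by
            rw [hX'def, hY'def, he_half]
  exact key T hT le_rfl
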